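/- Let n ≥ 4, let c ∈ ℂ^× with c ≠ 1, and let x = (x_2,…,x_{2n−1}) be nonzero complex numbers such that all denominators occurring below are nonzero. Let x′ = e_0^c(x). Then for every 3 ≤ k ≤ n−1 one has x′_k/x′_{n+k−1} = (c·S(x)²/(c−1)) · ( 1/(c·S_{k−1}(x) + T_{k−1}(x)) − 1/(c·S_k(x) + T_k(x)) ). -/

import Mathlib

noncomputable section

/-- `Sf n x k = ∑_{j=2}^{k} x_j / x_{n+j-1}` (so `Sf n x 1 = 0`, `S(x) = Sf n x n`). -/
def Sf (n : ℕ) (x : ℕ → ℂ) (k : ℕ) : ℂ :=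
  ∑ j ∈ Finset.Icc 2 k, x j / x (n + j - 1)

/-- `Tf n x k = ∑_{j=k+1}^{n} x_j / x (n+j-1)` (so `Tf n x n = 0`). -/
def Tf (n : ℕ) (x : ℕ → ℂ) (k : ℕ) : ℂ :=
  ∑ j ∈ Finset.Icc (k + 1) n, x j / x (n + j - 1)

/-- The rational map `e_0^c`. -/
def e0M (n : ℕ) (c : ℂ) (x : ℕ → ℂ) (k : ℕ) : ℂ :=
  if k ≤ n - 1 then x k * Sf n x n / (c * Sf n x k + Tf n x k)
  else if k ≤ n + 1 then x k / c
  else x k * (c * Sf n x (k - n) + Tf n x (k - n)) / (c * Sf n x n)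

/-- the `k`-formula for `x′ = e_0^c(x)`, `3 ≤ k ≤ n-1`, `c ≠ 1`:
`x′_k/x′_{n+k-1} = (c·S(x)²/(c-1))·(1/(c·S_{k-1}+T_{k-1}) - 1/(c·S_k+T_k))`. -/
theorem stmt12 (n : ℕ) (hn : 4 ≤ n) (c : ℂ) (hc : c ≠ 0) (hc1 : c ≠ 1) (x : ℕ → ℂ)
    (hx : ∀ k, 2 ≤ k → k ≤ 2 * n - 1 → x k ≠ 0)
    (hS : Sf n x n ≠ 0)
    (hden : ∀ k, 2 ≤ k → k ≤ n - 1 → c * Sf n x k + Tf n x k ≠ 0) :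
    ∀ k, 3 ≤ k → k ≤ n - 1 →
      e0M n c x k / e0M n c x (n + k - 1)
        = (c * (Sf n x n) ^ 2 / (c - 1)) *
            ((c * Sf n x (k - 1) + Tf n x (k - 1))⁻¹ - (c * Sf n x k + Tf n x k)⁻¹) := by
  rintro k hk3 hkn
  obtain ⟨m, rfl⟩ : ∃ m, k = m + 2 := ⟨k - 2, by omega⟩
  have hxk : x (m + 2) ≠ 0 := hx _ (by omega) (by omega)
  have hidx : n + (m + 2) - 1 = n + m + 1 := by omega
  have hxnk : x (n + m + 1) ≠ 0 := hx _ (by omega) (by omega)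
  have h1 : e0M n c x (m + 2)
      = x (m + 2) * Sf n x n / (c * Sf n x (m + 2) + Tf n x (m + 2)) := by
    unfold e0M; rw [if_pos hkn]
  have h2 : e0M n c x (n + (m + 2) - 1)
      = x (n + m + 1) * (c * Sf n x (m + 1) + Tf n x (m + 1)) / (c * Sf n x n) := by
    unfold e0M
    rw [hidx, if_neg (by omega), if_neg (by omega)]
    have : n + m + 1 - n = m + 1 := by omega
    rw [this]
  have hSsplit : Sf n x (m + 2) = Sf n x (m + 1) + x (m + 2) / x (n + m + 1) := by
    unfold Sf
    rw [Finset.sum_Icc_succ_top (by omega : 2 ≤ m + 2),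
      show n + (m + 1 + 1) - 1 = n + m + 1 from by omega]
  have hTsplit : Tf n x (m + 1) = x (m + 2) / x (n + m + 1) + Tf n x (m + 2) := by
    unfold Tf
    have hins : Finset.Icc (m + 1 + 1) n = insert (m + 2) (Finset.Icc (m + 2 + 1) n) := by
      ext j
      simp only [Finset.mem_Icc, Finset.mem_insert]
      omega
    rw [hins, Finset.sum_insert (by simp [Finset.mem_Icc]), hidx]
  have hA : c * Sf n x (m + 1) + Tf n x (m + 1) ≠ 0 := hden _ (by omega) (by omega)
  have hB : c * Sf n x (m + 2) + Tf n x (m + 2) ≠ 0 := hden _ (by omega) (by omega)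
  have hc1' : c - 1 ≠ 0 := sub_ne_zero.mpr hc1
  have key : c * Sf n x (m + 2) + Tf n x (m + 2)
      = (c * Sf n x (m + 1) + Tf n x (m + 1)) + (c - 1) * (x (m + 2) / x (n + m + 1)) := by
    rw [hSsplit, hTsplit]; ring
  have hk1 : (m + 2 : ℕ) - 1 = m + 1 := by omega
  have hBA : (c * Sf n x (m + 2) + Tf n x (m + 2)) - (c * Sf n x (m + 1) + Tf n x (m + 1))
      = (c - 1) * (x (m + 2) / x (n + m + 1)) := by rw [key]; ring
  rw [h1, h2, hk1, inv_sub_inv hA hB, hBA]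
  field_simp
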